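/- Let α ∈ [0, π/3), θ ∈ (π, 2π) with cos θ = cos α − 1/2, and let Λ be the Lobachevsky function. Then Λ((α−θ)/2) > Λ((α+θ)/2), i.e. the quantity −2(Λ((α+θ)/2) − Λ((α−θ)/2)) is strictly positive. -/

import Mathlib

open Real intervalIntegral

namespace LobAux

open MeasureTheory Set

noncomputable def lobF : ℝ → ℝ := fun t => Real.log |2 * Real.sin t|

lemma lobF_def : (fun t => Real.log |2 * Real.sin t|) = lobF := rfl

lemma lobF_neg (x : ℝ) : lobF (-x) = lobF x := by
  simp [lobF, Real.sin_neg, mul_neg, abs_neg]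

lemma lobF_pi_sub (x : ℝ) : lobF (π - x) = lobF x := by
  simp [lobF, Real.sin_pi_sub]

lemma lobF_periodic : Function.Periodic lobF π := fun x => by
  simp [lobF, Real.sin_add_pi, mul_neg, abs_neg]

lemma log_int01 : IntervalIntegrable Real.log volume 0 1 := by
  have hcont : ContinuousOn (fun x : ℝ => x - x * Real.log x) (Icc 0 1) :=
    (continuous_id.sub Real.continuous_mul_log).continuousOn
  have hderiv : ∀ x ∈ Ioo (0:ℝ) 1,
      HasDerivAt (fun x : ℝ => x - x * Real.log x) (-Real.log x) x := by
    intro x hx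
    have h := (hasDerivAt_id x).sub (Real.hasDerivAt_mul_log (ne_of_gt hx.1))
    exact h.congr_deriv (by ring)
  have hnonneg : ∀ x ∈ Ioo (0:ℝ) 1, 0 ≤ -Real.log x := fun x hx =>
    neg_nonneg.2 (Real.log_nonpos hx.1.le hx.2.le)
  have hint : IntegrableOn (fun x => -Real.log x) (Ioo (0:ℝ) 1) volume :=
    (integrableOn_deriv_of_nonneg hcont hderiv hnonneg).mono_set Ioo_subset_Ioc_self
  have hint2 : IntegrableOn Real.log (Ioo (0:ℝ) 1) volume := by
    have h := hint.neg
    rw [show (-(fun x => -Real.log x) : ℝ → ℝ) = Real.log from funext fun x => by simp] at h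
    exact h
  rw [intervalIntegrable_iff_integrableOn_Ioo_of_le (by norm_num)]
  exact hint2

lemma log_int_half : IntervalIntegrable Real.log volume 0 (π/2) := by
  refine log_int01.trans ?_
  refine intervalIntegrable_log ?_
  intro hmem
  rcases Set.mem_uIcc.mp hmem with ⟨h1, _⟩ | ⟨h1, _⟩
  · linarith
  · linarith [Real.pi_pos]

lemma lobF_int_half : IntervalIntegrable lobF volume 0 (π/2) := by
  have hmeas : AEStronglyMeasurable lobF (volume.restrict (Set.uIoc (0:ℝ) (π/2))) :=
    (Real.measurable_log.comp
      ((continuous_const.mul Real.continuous_sin).abs.measurable)).aestronglyMeasurable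
  refine IntervalIntegrable.mono_fun'
    (g := fun x => 2 * Real.log 2 - Real.log x)
    (intervalIntegrable_const.sub log_int_half) hmeas ?_
  rw [Set.uIoc_of_le (le_of_lt (by positivity : (0:ℝ) < π/2))]
  rw [Filter.EventuallyLE, MeasureTheory.ae_restrict_iff' measurableSet_Ioc]
  refine MeasureTheory.ae_of_all _ (fun x hx => ?_)
  obtain ⟨hx0, hx2⟩ := hx
  have hπ : (0:ℝ) < π := Real.pi_pos
  have hπ4 : π ≤ 4 := Real.pi_le_four
  have hsin : 0 < Real.sin x := Real.sin_pos_of_pos_of_lt_pi hx0 (by linarith)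
  have habs : |2 * Real.sin x| = 2 * Real.sin x := abs_of_pos (by linarith)
  have hjordan : 2 / π * x ≤ Real.sin x := Real.mul_le_sin hx0.le hx2
  have hlow : x ≤ 2 * Real.sin x := by
    have h1 : x / 2 ≤ 2 / π * x := by
      rw [div_mul_eq_mul_div, div_le_div_iff₀ (by norm_num : (0:ℝ) < 2) hπ]
      nlinarith
    linarith
  have hup : 2 * Real.sin x ≤ 2 := by nlinarith [Real.sin_le_one x]
  have hl1 : Real.log x ≤ Real.log (2 * Real.sin x) := Real.log_le_log hx0 hlow
  have hl2 : Real.log (2 * Real.sin x) ≤ Real.log 2 := Real.log_le_log (by linarith) hup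
  have h2 : (0:ℝ) ≤ Real.log 2 := Real.log_nonneg (by norm_num)
  have hx2' : Real.log x ≤ Real.log 2 := Real.log_le_log hx0 (by linarith)
  show ‖lobF x‖ ≤ 2 * Real.log 2 - Real.log x
  rw [Real.norm_eq_abs]
  show abs (Real.log |2 * Real.sin x|) ≤ 2 * Real.log 2 - Real.log x
  rw [habs, abs_le]
  constructor <;> linarith

lemma lobF_int_second : IntervalIntegrable lobF volume (π/2) π := by
  have h := lobF_int_half.comp_sub_left π
  rw [show (fun x => lobF (π - x)) = lobF from funext lobF_pi_sub] at h
  rw [sub_zero, show π - π/2 = π/2 by ring] at h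
  exact h.symm

lemma lobF_int_0pi : IntervalIntegrable lobF volume 0 π :=
  lobF_int_half.trans lobF_int_second

lemma lobF_int_negpi : IntervalIntegrable lobF volume (-π) 0 := by
  have h := (IntervalIntegrable.iff_comp_neg).mp lobF_int_0pi
  rw [show (fun x => lobF (-x)) = lobF from funext lobF_neg] at h
  rw [neg_zero] at h
  exact h.symm

lemma lobF_int (u v : ℝ) (hu : u ∈ Icc (-π) π) (hv : v ∈ Icc (-π) π) :
    IntervalIntegrable lobF volume u v := by
  refine (lobF_int_negpi.trans lobF_int_0pi).mono_set ?_
  have hle : (-π : ℝ) ≤ π := by linarith [Real.pi_pos]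
  refine Set.uIcc_subset_uIcc ?_ ?_ <;> rw [Set.uIcc_of_le hle]
  · exact hu
  · exact hv

lemma even_integral (u v : ℝ) : (∫ x in u..v, lobF x) = ∫ x in (-v)..(-u), lobF x :=
  (intervalIntegral.integral_congr fun x _ => (lobF_neg x).symm).trans
    (intervalIntegral.integral_comp_neg lobF)

lemma reflect_integral (u v : ℝ) :
    (∫ x in u..v, lobF x) = ∫ x in (π - v)..(π - u), lobF x :=
  (intervalIntegral.integral_congr fun x _ => (lobF_pi_sub x).symm).trans
    (intervalIntegral.integral_comp_sub_left lobF π)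

lemma lobF_sym : (∫ x in (π/2:ℝ)..π, lobF x) = ∫ x in (0:ℝ)..(π/2), lobF x := by
  rw [reflect_integral (π/2) π, sub_self, show π - π/2 = π/2 by ring]

lemma lobF_integral_half : (∫ x in (0:ℝ)..(π/2), lobF x) = 0 := by
  have hπ : (0:ℝ) < π := Real.pi_pos
  set I := ∫ x in (0:ℝ)..(π/2), lobF x with hI
  have hJ : (∫ x in (0:ℝ)..π, lobF x) = I + I := by
    rw [← intervalIntegral.integral_add_adjacent_intervals lobF_int_half lobF_int_second,
      lobF_sym]
  have hmul : (∫ x in (0:ℝ)..(π/2), lobF (2*x)) = (2:ℝ)⁻¹ • ∫ x in (0:ℝ)..π, lobF x := by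
    have h := intervalIntegral.integral_comp_mul_left (a := (0:ℝ)) (b := π/2) lobF
      (by norm_num : (2:ℝ) ≠ 0)
    rw [mul_zero, show (2:ℝ) * (π/2) = π by ring] at h
    exact h
  have hae : ∀ᵐ (x : ℝ) ∂volume, x ∈ Set.uIoc (0:ℝ) (π/2) →
      lobF (2*x) = lobF x + lobF (x + π/2) := by
    have hne : ∀ᵐ (x : ℝ) ∂volume, x ≠ π/2 := by
      rw [MeasureTheory.ae_iff]
      simpa using measure_singleton (π/2 : ℝ)
    filter_upwards [hne] with x hx hmem
    rw [Set.uIoc_of_le (le_of_lt (by positivity : (0:ℝ) < π/2))] at hmem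
    obtain ⟨h1, h2⟩ := hmem
    have h2' : x < π/2 := lt_of_le_of_ne h2 hx
    have hsin : 0 < Real.sin x := Real.sin_pos_of_pos_of_lt_pi h1 (by linarith)
    have hcos : 0 < Real.cos x := Real.cos_pos_of_mem_Ioo ⟨by linarith, h2'⟩
    show Real.log |2 * Real.sin (2*x)| =
      Real.log |2 * Real.sin x| + Real.log |2 * Real.sin (x + π/2)|
    rw [Real.sin_add_pi_div_two, Real.sin_two_mul,
      show (2:ℝ) * (2 * Real.sin x * Real.cos x) = (2 * Real.sin x) * (2 * Real.cos x) by ring,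
      abs_mul, Real.log_mul (abs_ne_zero.2 (by positivity)) (abs_ne_zero.2 (by positivity))]
  have hshiftint : IntervalIntegrable (fun x => lobF (x + π/2)) volume 0 (π/2) := by
    have h := lobF_int_second.comp_add_right (π/2)
    rw [sub_self, show π - π/2 = π/2 by ring] at h
    exact h
  have hshift : (∫ x in (0:ℝ)..(π/2), lobF (x + π/2)) = I := by
    rw [intervalIntegral.integral_comp_add_right lobF (π/2), zero_add,
      show π/2 + π/2 = π by ring]
    exact lobF_sym
  have hcongr := intervalIntegral.integral_congr_ae hae
  rw [hmul, hJ, smul_eq_mul] at hcongr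
  rw [intervalIntegral.integral_add lobF_int_half hshiftint, hshift] at hcongr
  linarith

lemma lobF_integral_pi : (∫ x in (0:ℝ)..π, lobF x) = 0 := by
  rw [← intervalIntegral.integral_add_adjacent_intervals lobF_int_half lobF_int_second,
    lobF_sym, lobF_integral_half]
  norm_num

lemma pos_combo (c s : ℝ) (hc0 : 0 ≤ c) (hc6 : c ≤ π/6) (hs1 : π/6 ≤ s) (hs2 : s < π/2) :
    0 < (∫ x in c..(π/2:ℝ), lobF x) + ∫ x in s..(π/2:ℝ), lobF x := by
  have hπ : (0:ℝ) < π := Real.pi_pos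
  have h6 : (∫ x in (0:ℝ)..c, lobF x) ≤ 0 := by
    have hnn : 0 ≤ ∫ x in (0:ℝ)..c, -lobF x := by
      refine intervalIntegral.integral_nonneg hc0 (fun u hu => ?_)
      obtain ⟨hu0, huc⟩ := hu
      have hsin0 : 0 ≤ Real.sin u :=
        Real.sin_nonneg_of_nonneg_of_le_pi hu0 (by linarith)
      have hsin : Real.sin u ≤ 1/2 := by
        have h := Real.sin_le_sin_of_le_of_le_pi_div_two
          (by linarith : -(π/2) ≤ u) (by linarith : π/6 ≤ π/2) (by linarith : u ≤ π/6)
        rwa [Real.sin_pi_div_six] at h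
      have : lobF u ≤ 0 := by
        show Real.log |2 * Real.sin u| ≤ 0
        refine Real.log_nonpos (abs_nonneg _) ?_
        rw [abs_of_nonneg (by linarith)]
        linarith
      linarith
    rw [intervalIntegral.integral_neg] at hnn
    linarith
  have hsplit : (∫ x in (0:ℝ)..c, lobF x) + (∫ x in c..(π/2:ℝ), lobF x)
      = ∫ x in (0:ℝ)..(π/2:ℝ), lobF x :=
    intervalIntegral.integral_add_adjacent_intervals
      (lobF_int 0 c (by constructor <;> linarith) (by constructor <;> linarith))
      (lobF_int c (π/2) (by constructor <;> linarith) (by constructor <;> linarith))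
  have h7 : 0 < ∫ x in s..(π/2:ℝ), lobF x := by
    refine intervalIntegral.intervalIntegral_pos_of_pos_on
      (lobF_int s (π/2) (by constructor <;> linarith) (by constructor <;> linarith))
      (fun x hx => ?_) hs2
    obtain ⟨hx1, hx2⟩ := hx
    have h1 : 1/2 < Real.sin x := by
      have hlt : Real.sin (π/6) < Real.sin x :=
        Real.strictMonoOn_sin ⟨by linarith, by linarith⟩ ⟨by linarith, le_of_lt hx2⟩
          (by linarith)
      rwa [Real.sin_pi_div_six] at hlt
    show 0 < Real.log |2 * Real.sin x|
    rw [abs_of_pos (by linarith)]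
    exact Real.log_pos (by linarith)
  rw [lobF_integral_half] at hsplit
  linarith

end LobAux

set_option maxHeartbeats 1000000 in
theorem lobachevsky_difference_pos
    (Λ : ℝ → ℝ) (hΛ : ∀ x : ℝ, Λ x = -∫ t in (0:ℝ)..x, Real.log |2 * Real.sin t|)
    (α θ : ℝ) (hα0 : 0 ≤ α) (hα1 : α < Real.pi / 3)
    (hθ : θ ∈ Set.Ioo Real.pi (2 * Real.pi))
    (hcos : Real.cos θ = Real.cos α - 1 / 2) :
    Λ ((α - θ) / 2) > Λ ((α + θ) / 2) := by
  obtain ⟨hθ1, hθ2⟩ := hθ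
  have hπ : (0:ℝ) < π := Real.pi_pos
  -- basic trig bounds on θ
  have hcosα : 1/2 < Real.cos α := by
    have h := Real.cos_lt_cos_of_nonneg_of_le_pi hα0 (by linarith) hα1
    rwa [Real.cos_pi_div_three] at h
  have hcosθ : 0 < Real.cos θ := by rw [hcos]; linarith
  have h32 : 3*π/2 < θ := by
    by_contra h
    push_neg at h
    have : Real.cos θ ≤ 0 :=
      Real.cos_nonpos_of_pi_div_two_le_of_le (by linarith) (by linarith)
    linarith
  have h53 : θ ≤ 5*π/3 := by
    by_contra h
    push_neg at h
    have h1 : Real.cos (π/3) < Real.cos (2*π - θ) :=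
      Real.cos_lt_cos_of_nonneg_of_le_pi (by linarith) (by linarith) (by linarith)
    rw [Real.cos_two_pi_sub, Real.cos_pi_div_three] at h1
    have := Real.cos_le_one α
    linarith
  rw [gt_iff_lt, hΛ, hΛ, neg_lt_neg_iff, LobAux.lobF_def]
  set A := (α - θ)/2 with hA
  set B := (α + θ)/2 with hB
  -- numeric bounds
  have hA1 : -π ≤ A := by rw [hA]; linarith
  have hA2 : A < -π/2 := by rw [hA]; linarith
  have hB1 : π/2 < B := by rw [hB]; linarith
  have hB2 : B < π := by rw [hB]; linarith
  -- the key product identity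
  have hprod : Real.sin ((θ+α)/2) * Real.sin ((θ-α)/2) = 1/4 := by
    linear_combination (Real.cos_sub_cos θ α - hcos) / 2
  have hBeq : (θ+α)/2 = B := by rw [hB]; ring
  have hAeq : (θ-α)/2 = -A := by rw [hA]; ring
  rw [hBeq, hAeq] at hprod
  -- sin relations
  have hsinB : Real.sin (π - B) = Real.sin B := Real.sin_pi_sub B
  have hsinA : Real.sin (π + A) = Real.sin (-A) := by
    rw [show π + A = A + π by ring, Real.sin_add_pi, Real.sin_neg]
  -- bounds for s := π + A
  have hs1 : π/6 ≤ π + A := by rw [hA]; linarith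
  have hs2 : π + A < π/2 := by linarith
  have hsins : 1/2 ≤ Real.sin (π + A) := by
    have h := Real.sin_le_sin_of_le_of_le_pi_div_two
      (by linarith : -(π/2) ≤ π/6) (by linarith : π + A ≤ π/2) hs1
    rwa [Real.sin_pi_div_six] at h
  -- bounds for c := π - B
  have hc0 : 0 < π - B := by linarith
  have hcq : π - B < π/2 := by linarith
  have hsincpos : 0 < Real.sin (π - B) :=
    Real.sin_pos_of_pos_of_lt_pi hc0 (by linarith)
  have hsinc : Real.sin (π - B) ≤ 1/2 := by
    rw [hsinB] at hsincpos ⊢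
    rw [hsinA] at hsins
    nlinarith
  have hc6 : π - B ≤ π/6 := by
    by_contra h
    push_neg at h
    have hlt : Real.sin (π/6) < Real.sin (π - B) :=
      Real.strictMonoOn_sin ⟨by linarith, by linarith⟩ ⟨by linarith, by linarith⟩ h
    rw [Real.sin_pi_div_six] at hlt
    linarith
  -- memberships for integrability
  have m : ∀ x : ℝ, -π ≤ x → x ≤ π → x ∈ Set.Icc (-π) π := fun x h1 h2 => ⟨h1, h2⟩
  have iA : IntervalIntegrable LobAux.lobF MeasureTheory.volume 0 A :=
    LobAux.lobF_int 0 A (m 0 (by linarith) (by linarith)) (m A (by linarith) (by linarith))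
  have iAB : IntervalIntegrable LobAux.lobF MeasureTheory.volume A B :=
    LobAux.lobF_int A B (m A (by linarith) (by linarith)) (m B (by linarith) (by linarith))
  have iABπ : IntervalIntegrable LobAux.lobF MeasureTheory.volume A (B - π) :=
    LobAux.lobF_int A (B-π) (m A (by linarith) (by linarith))
      (m (B-π) (by linarith) (by linarith))
  have iBπB : IntervalIntegrable LobAux.lobF MeasureTheory.volume (B - π) B :=
    LobAux.lobF_int (B-π) B (m (B-π) (by linarith) (by linarith))
      (m B (by linarith) (by linarith))
  have icd1 : IntervalIntegrable LobAux.lobF MeasureTheory.volume (π - B) (π/2) :=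
    LobAux.lobF_int (π-B) (π/2) (m (π-B) (by linarith) (by linarith))
      (m (π/2) (by linarith) (by linarith))
  have icd2 : IntervalIntegrable LobAux.lobF MeasureTheory.volume (π/2) (-A) :=
    LobAux.lobF_int (π/2) (-A) (m (π/2) (by linarith) (by linarith))
      (m (-A) (by linarith) (by linarith))
  -- main chain
  have hadj : (∫ t in (0:ℝ)..A, LobAux.lobF t) + ∫ t in A..B, LobAux.lobF t
      = ∫ t in (0:ℝ)..B, LobAux.lobF t :=
    intervalIntegral.integral_add_adjacent_intervals iA iAB
  suffices hpos : 0 < ∫ t in A..B, LobAux.lobF t by linarith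
  have hadj2 : (∫ t in A..(B-π), LobAux.lobF t) + ∫ t in (B-π)..B, LobAux.lobF t
      = ∫ t in A..B, LobAux.lobF t :=
    intervalIntegral.integral_add_adjacent_intervals iABπ iBπB
  have hper : (∫ t in (B-π)..B, LobAux.lobF t) = ∫ t in (0:ℝ)..π, LobAux.lobF t := by
    have h := LobAux.lobF_periodic.intervalIntegral_add_eq (B - π) 0
    rw [show B - π + π = B by ring, zero_add] at h
    exact h
  have heq : (∫ t in A..(B-π), LobAux.lobF t) = ∫ t in (π-B)..(-A), LobAux.lobF t := by
    rw [LobAux.even_integral A (B-π), neg_sub]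
  have hadj3 : (∫ t in (π-B)..(π/2:ℝ), LobAux.lobF t)
      + ∫ t in (π/2:ℝ)..(-A), LobAux.lobF t
      = ∫ t in (π-B)..(-A), LobAux.lobF t :=
    intervalIntegral.integral_add_adjacent_intervals icd1 icd2
  have hrefl : (∫ t in (π/2:ℝ)..(-A), LobAux.lobF t)
      = ∫ t in (π+A)..(π/2:ℝ), LobAux.lobF t := by
    rw [LobAux.reflect_integral (π/2) (-A), show π - -A = π + A by ring,
      show π - π/2 = π/2 by ring]
  have hkey := LobAux.pos_combo (π - B) (π + A) (le_of_lt hc0) hc6 hs1 hs2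
  rw [LobAux.lobF_integral_pi] at hper
  linarith
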